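/- arXiv:2306.10488 — 2 statements merged into one kernel-verified Lean document; each statement's English description precedes it below -/
import Mathlib

section
/- For 0 < α < 2, the function φ ↦ (2 cos(φ/2))^α + (2 sin(φ/2))^α on (0, π) attains its maximum uniquely at φ = π/2. -/
open Real

/-- For `0 < α < 2`, the function `φ ↦ (2 cos (φ/2))^α + (2 sin (φ/2))^α` on `(0, π)`
attains its maximum uniquely at `φ = π/2`. -/
theorem stmt6 (α : ℝ) (hα0 : 0 < α) (hα2 : α < 2) :
    ∀ φ ∈ Set.Ioo (0 : ℝ) π, φ ≠ π / 2 →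
      (2 * cos (φ / 2)) ^ α + (2 * sin (φ / 2)) ^ α <
        (2 * cos (π / 2 / 2)) ^ α + (2 * sin (π / 2 / 2)) ^ α := by
  intro φ hφ hne
  obtain ⟨hφ0, hφπ⟩ := hφ
  have hx0 : 0 < φ / 2 := by linarith
  have hxπ : φ / 2 < π / 2 := by linarith
  have hcos : 0 < cos (φ / 2) := Real.cos_pos_of_mem_Ioo ⟨by linarith, hxπ⟩
  have hsin : 0 < sin (φ / 2) := Real.sin_pos_of_pos_of_lt_pi hx0 (by linarith [Real.pi_pos])
  set c := 2 * cos (φ / 2) with hc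
  set s := 2 * sin (φ / 2) with hs
  have hcpos : 0 < c := by positivity
  have hspos : 0 < s := by positivity
  have hcs : c ≠ s := by
    intro h
    have hsc : sin (φ / 2) = sin (π / 2 - φ / 2) := by
      rw [Real.sin_pi_div_two_sub]
      linarith [h]
    have := Real.injOn_sin ⟨by linarith [Real.pi_pos], by linarith⟩
      ⟨by linarith, by linarith⟩ hsc
    apply hne; linarith
  have hsum : c ^ 2 + s ^ 2 = 4 := by
    have := Real.sin_sq_add_cos_sq (φ / 2)
    ring_nf
    ring_nf at this
    rw [hc, hs]; ring_nf; nlinarith [this]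
  -- strict concavity
  have hp0 : 0 < α / 2 := by linarith
  have hp1 : α / 2 < 1 := by linarith
  have hne2 : (c ^ 2 : ℝ) ≠ s ^ 2 := by
    intro h
    exact hcs (by nlinarith)
  have hconc := (Real.strictConcaveOn_rpow hp0 hp1).2
    (Set.mem_Ici.2 (by positivity : (0:ℝ) ≤ c ^ 2))
    (Set.mem_Ici.2 (by positivity : (0:ℝ) ≤ s ^ 2))
    hne2 (by norm_num : (0:ℝ) < 1/2) (by norm_num : (0:ℝ) < 1/2) (by norm_num)
  simp only [smul_eq_mul] at hconc
  have hmid : (1/2 : ℝ) * c ^ 2 + (1/2 : ℝ) * s ^ 2 = 2 := by linarith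
  rw [hmid] at hconc
  -- rewrite c^α = (c^2)^(α/2)
  have hrw : ∀ x : ℝ, 0 < x → x ^ α = (x ^ 2) ^ (α / 2) := by
    intro x hx
    rw [← Real.rpow_natCast x 2, ← Real.rpow_mul hx.le]
    norm_num
    congr 1
    ring
  -- RHS value
  have hval : (2 * cos (π / 2 / 2)) ^ α + (2 * sin (π / 2 / 2)) ^ α = 2 * (2:ℝ) ^ (α / 2) := by
    have h4 : π / 2 / 2 = π / 4 := by ring
    rw [h4, Real.cos_pi_div_four, Real.sin_pi_div_four]
    have h2 : 2 * (Real.sqrt 2 / 2) = Real.sqrt 2 := by ring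
    rw [h2]
    have hs2 : Real.sqrt 2 = (2:ℝ) ^ ((1:ℝ)/2) := Real.sqrt_eq_rpow 2
    rw [hs2, ← Real.rpow_mul (by norm_num : (0:ℝ) ≤ 2)]
    ring_nf
  rw [hval, hrw c hcpos, hrw s hspos]
  linarith [hconc]
end

section
/- Let n ≥ 5 and suppose Γ_n = τ(Γ_n°) where Γ_n° is the regular n-gon with edge length 1, τ(v) = Av + b is an affine transformation of ℝ², and Γ_n also has all edges of length 1. Then A is orthogonal, i.e., τ is an isometry, and hence Γ_n is congruent to Γ_n°. -/
open Real

/-- Let `n ≥ 5`, let `P` be the regular `n`-gon with unit edge length (inscribed in a circle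
of radius `1/(2 sin (π/n))`), and let `τ v = A v + b` be an affine map of `ℝ²` such that the
image polygon `τ ∘ P` again has all edges of length `1`. Then `τ` is an isometry; in
particular the image polygon is congruent to the regular one. -/
theorem stmt11 (n : ℕ) [NeZero n] (hn : 5 ≤ n)
    (A : EuclideanSpace ℝ (Fin 2) →ₗ[ℝ] EuclideanSpace ℝ (Fin 2))
    (b : EuclideanSpace ℝ (Fin 2))
    (P : Fin n → EuclideanSpace ℝ (Fin 2))
    (hP : ∀ i : Fin n, P i = (WithLp.equiv 2 (Fin 2 → ℝ)).symm
      ![(1 / (2 * sin (π / n))) * cos (2 * π * i / n),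
        (1 / (2 * sin (π / n))) * sin (2 * π * i / n)])
    (hedge : ∀ i : Fin n, dist (A (P (i + 1)) + b) (A (P i) + b) = 1) :
    ∀ u v : EuclideanSpace ℝ (Fin 2), dist (A u + b) (A v + b) = dist u v := by
  have hn5 : (5:ℝ) ≤ n := by exact_mod_cast hn
  have hnpos : (0:ℝ) < n := by linarith
  have hpi := Real.pi_pos
  set x : ℝ := π / n with hx
  have hx0 : 0 < x := div_pos hpi hnpos
  have hx5 : x ≤ π / 5 := div_le_div_of_nonneg_left hpi.le (by norm_num) hn5
  set s : ℝ := sin x with hsdef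
  set c : ℝ := cos x with hcdef
  have hsc : s ^ 2 + c ^ 2 = 1 := sin_sq_add_cos_sq x
  have hs : 0 < s := sin_pos_of_pos_of_lt_pi hx0 (by linarith)
  have hs0 : s ≠ 0 := ne_of_gt hs
  have hc : 0 < c := cos_pos_of_mem_Ioo ⟨by linarith, by linarith⟩
  have h2xpos : (0:ℝ) < cos (2 * x) := cos_pos_of_mem_Ioo ⟨by linarith, by linarith⟩
  have hC2 : cos (2 * x) = 1 - 2 * s ^ 2 := by rw [cos_two_mul]; linear_combination 2 * hsc
  have h2s : 2 * s ^ 2 < 1 := by rw [hC2] at h2xpos; linarith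
  have hs1 : s ^ 2 < 1 := by nlinarith
  have hS2 : sin (2 * x) = 2 * s * c := sin_two_mul x
  have hC4 : cos (4 * x) = 1 - 8 * s ^ 2 + 8 * s ^ 4 := by
    rw [show (4:ℝ) * x = 2 * (2 * x) by ring, cos_two_mul, hC2]; ring
  have hS4 : sin (4 * x) = 2 * s * c * (2 - 4 * s ^ 2) := by
    rw [show (4:ℝ) * x = 2 * (2 * x) by ring, sin_two_mul, hS2, hC2]; ring
  have hC6 : cos (6 * x) = 1 - 18 * s ^ 2 + 48 * s ^ 4 - 32 * s ^ 6 := by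
    rw [show (6:ℝ) * x = 3 * (2 * x) by ring, cos_three_mul, hC2]; ring
  have hS6 : sin (6 * x) = 2 * s * c * (3 - 16 * s ^ 2 + 16 * s ^ 4) := by
    rw [show (6:ℝ) * x = 2 * x + 4 * x by ring, sin_add, hS2, hC2, hS4, hC4]; ring
  -- basis vectors and the quadratic form of A
  set v0 : EuclideanSpace ℝ (Fin 2) := EuclideanSpace.single 0 1 with hv0
  set v1 : EuclideanSpace ℝ (Fin 2) := EuclideanSpace.single 1 1 with hv1
  set a0 : ℝ := inner ℝ (A v0) (A v0) with ha0def
  set b0 : ℝ := inner ℝ (A v0) (A v1) with hb0def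
  set c0 : ℝ := inner ℝ (A v1) (A v1) with hc0def
  have hdecomp : ∀ p : EuclideanSpace ℝ (Fin 2), p = p 0 • v0 + p 1 • v1 := by
    intro p
    ext i
    fin_cases i <;>
      simp [hv0, hv1, EuclideanSpace.single_apply]
  have hQ : ∀ p : EuclideanSpace ℝ (Fin 2),
      (inner ℝ (A p) (A p) : ℝ) = p 0 ^ 2 * a0 + 2 * (p 0 * p 1) * b0 + p 1 ^ 2 * c0 := by
    intro p
    conv_lhs => rw [hdecomp p]
    rw [map_add, map_smul, map_smul, real_inner_add_add_self]
    rw [real_inner_smul_left, real_inner_smul_left, real_inner_smul_left,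
      real_inner_smul_right, real_inner_smul_right, real_inner_smul_right]
    rw [← ha0def, ← hb0def, ← hc0def]
    ring
  -- edge conditions as inner products
  have hedge' : ∀ i : Fin n,
      (inner ℝ (A (P (i + 1) - P i)) (A (P (i + 1) - P i)) : ℝ) = 1 := by
    intro i
    have h := hedge i
    rw [dist_add_right, dist_eq_norm, ← map_sub] at h
    rw [real_inner_self_eq_norm_sq, h]; norm_num
  -- coordinates of P
  have hP0 : ∀ j : Fin n, (P j) 0 = (1 / (2 * s)) * cos (2 * π * j / n) := by
    intro j; rw [hP j]; rfl
  have hP1 : ∀ j : Fin n, (P j) 1 = (1 / (2 * s)) * sin (2 * π * j / n) := by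
    intro j; rw [hP j]; rfl
  -- the three special indices
  have h0n : 0 < n := by omega
  have h1n : 1 < n := by omega
  have h2n : 2 < n := by omega
  have h3n : 3 < n := by omega
  set i0 : Fin n := ⟨0, h0n⟩ with hi0
  set i1 : Fin n := ⟨1, h1n⟩ with hi1
  set i2 : Fin n := ⟨2, h2n⟩ with hi2
  set i3 : Fin n := ⟨3, h3n⟩ with hi3
  have e01 : i0 + 1 = i1 := by
    apply Fin.ext
    rw [Fin.add_def]
    simp only [hi0, hi1, Fin.val_one', Fin.val_mk]
    rw [Nat.mod_eq_of_lt (show (1:ℕ) < n by omega)]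
    exact Nat.mod_eq_of_lt (by omega)
  have e12 : i1 + 1 = i2 := by
    apply Fin.ext
    rw [Fin.add_def]
    simp only [hi1, hi2, Fin.val_one', Fin.val_mk]
    rw [Nat.mod_eq_of_lt (show (1:ℕ) < n by omega)]
    exact Nat.mod_eq_of_lt (by omega)
  have e23 : i2 + 1 = i3 := by
    apply Fin.ext
    rw [Fin.add_def]
    simp only [hi2, hi3, Fin.val_one', Fin.val_mk]
    rw [Nat.mod_eq_of_lt (show (1:ℕ) < n by omega)]
    exact Nat.mod_eq_of_lt (by omega)
  have hval0 : ((i0 : Fin n) : ℝ) = 0 := by simp [hi0]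
  have hval1 : ((i1 : Fin n) : ℝ) = 1 := by simp [hi1]
  have hval2 : ((i2 : Fin n) : ℝ) = 2 := by simp [hi2]
  have hval3 : ((i3 : Fin n) : ℝ) = 3 := by simp [hi3]
  have hang1 : 2 * π * (1:ℝ) / n = 2 * x := by rw [hx]; ring
  have hang2 : 2 * π * (2:ℝ) / n = 4 * x := by rw [hx]; ring
  have hang3 : 2 * π * (3:ℝ) / n = 6 * x := by rw [hx]; ring
  have hang0 : 2 * π * (0:ℝ) / n = 0 := by ring
  -- coordinates of the three edge vectors
  have hd00 : (P i1 - P i0) 0 = -s := by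
    rw [PiLp.sub_apply, hP0, hP0, hval0, hval1, hang1, hang0, hC2, cos_zero]
    first
    | (field_simp; ring)
    | field_simp
  have hd01 : (P i1 - P i0) 1 = c := by
    rw [PiLp.sub_apply, hP1, hP1, hval0, hval1, hang1, hang0, hS2, sin_zero]
    first
    | (field_simp; ring)
    | field_simp
  have hd10 : (P i2 - P i1) 0 = -(3 * s) + 4 * s ^ 3 := by
    rw [PiLp.sub_apply, hP0, hP0, hval1, hval2, hang1, hang2, hC2, hC4]
    first
    | (field_simp; ring)
    | field_simp
  have hd11 : (P i2 - P i1) 1 = c - 4 * s ^ 2 * c := by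
    rw [PiLp.sub_apply, hP1, hP1, hval1, hval2, hang1, hang2, hS2, hS4]
    first
    | (field_simp; ring)
    | field_simp
  have hd20 : (P i3 - P i2) 0 = -(5 * s) + 20 * s ^ 3 - 16 * s ^ 5 := by
    rw [PiLp.sub_apply, hP0, hP0, hval2, hval3, hang2, hang3, hC4, hC6]
    first
    | (field_simp; ring)
    | field_simp
  have hd21 : (P i3 - P i2) 1 = c - 12 * s ^ 2 * c + 16 * s ^ 4 * c := by
    rw [PiLp.sub_apply, hP1, hP1, hval2, hval3, hang2, hang3, hS4, hS6]
    first
    | (field_simp; ring)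
    | field_simp
  -- the three equations
  have h0 : (-s) ^ 2 * a0 + 2 * ((-s) * c) * b0 + c ^ 2 * c0 = 1 := by
    have h := hedge' i0
    rw [e01, hQ, hd00, hd01] at h
    exact h
  have h1 : (-(3 * s) + 4 * s ^ 3) ^ 2 * a0
      + 2 * ((-(3 * s) + 4 * s ^ 3) * (c - 4 * s ^ 2 * c)) * b0
      + (c - 4 * s ^ 2 * c) ^ 2 * c0 = 1 := by
    have h := hedge' i1
    rw [e12, hQ, hd10, hd11] at h
    exact h
  have h2 : (-(5 * s) + 20 * s ^ 3 - 16 * s ^ 5) ^ 2 * a0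
      + 2 * ((-(5 * s) + 20 * s ^ 3 - 16 * s ^ 5) * (c - 12 * s ^ 2 * c + 16 * s ^ 4 * c)) * b0
      + (c - 12 * s ^ 2 * c + 16 * s ^ 4 * c) ^ 2 * c0 = 1 := by
    have h := hedge' i2
    rw [e23, hQ, hd20, hd21] at h
    exact h
  -- eliminate: a0 = 1, b0 = 0, c0 = 1
  have hRpos : (0:ℝ) < 32 * s ^ 3 * c - 96 * s ^ 5 * c + 64 * s ^ 7 * c := by
    have f1 : (0:ℝ) < 1 - s ^ 2 := by linarith
    have f2 : (0:ℝ) < 1 - 2 * s ^ 2 := by linarith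
    have key := mul_pos (mul_pos (mul_pos (pow_pos hs 3) hc) f1) f2
    have hre : 32 * s ^ 3 * c - 96 * s ^ 5 * c + 64 * s ^ 7 * c
        = 32 * (s ^ 3 * c * (1 - s ^ 2) * (1 - 2 * s ^ 2)) := by ring
    rw [hre]; linarith
  have hRne : (32 * s ^ 3 * c - 96 * s ^ 5 * c + 64 * s ^ 7 * c : ℝ) ≠ 0 := ne_of_gt hRpos
  have ha1 : a0 = 1 := by
    have key : (32 * s ^ 3 * c - 96 * s ^ 5 * c + 64 * s ^ 7 * c) * (a0 - 1) = 0 := by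
      linear_combination (4*s*c^3 - 64*s^3*c^3 + 256*s^5*c^3 - 256*s^7*c^3) * h0
        + (-8*s*c^3 + 112*s^3*c^3 - 320*s^5*c^3 + 256*s^7*c^3) * h1
        + (4*s*c^3 - 16*s^3*c^3) * h2
        + (32*s^3*c - 32*s^3*c*a0 - 64*s^5*c + 64*s^5*c*a0) * hsc
    have := (mul_eq_zero.mp key).resolve_left hRne
    linarith
  have hb1 : b0 = 0 := by
    have key : (32 * s ^ 3 * c - 96 * s ^ 5 * c + 64 * s ^ 7 * c) * b0 = 0 := by
      linear_combination (16*s^2*c^2 - 160*s^4*c^2 + 384*s^6*c^2 - 256*s^8*c^2) * h0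
        + (-24*s^2*c^2 + 176*s^4*c^2 - 384*s^6*c^2 + 256*s^8*c^2) * h1
        + (8*s^2*c^2 - 16*s^4*c^2) * h2
        + (-32*s^3*c*b0 + 64*s^5*c*b0) * hsc
    exact (mul_eq_zero.mp key).resolve_left hRne
  have hc1 : c0 = 1 := by
    have key : (32 * s ^ 3 * c - 96 * s ^ 5 * c + 64 * s ^ 7 * c) * (c0 - 1) = 0 := by
      linear_combination (60*s^3*c - 320*s^5*c + 512*s^7*c - 256*s^9*c) * h0
        + (-40*s^3*c + 240*s^5*c - 448*s^7*c + 256*s^9*c) * h1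
        + (12*s^3*c - 16*s^5*c) * h2
        + (-32*s^3*c*c0 + 64*s^5*c*c0) * hsc
    have := (mul_eq_zero.mp key).resolve_left hRne
    linarith
  -- conclude: A preserves norms
  have hnorm : ∀ p : EuclideanSpace ℝ (Fin 2), ‖A p‖ = ‖p‖ := by
    intro p
    have hp2 : (inner ℝ p p : ℝ) = p 0 ^ 2 + p 1 ^ 2 := by
      rw [PiLp.inner_apply]
      simp [Fin.sum_univ_two, RCLike.inner_apply]
    have h1 : ‖A p‖ ^ 2 = ‖p‖ ^ 2 := by
      rw [← real_inner_self_eq_norm_sq, ← real_inner_self_eq_norm_sq, hQ p, hp2,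
        ha1, hb1, hc1]
      ring
    calc ‖A p‖ = √(‖A p‖ ^ 2) := (Real.sqrt_sq (norm_nonneg _)).symm
      _ = √(‖p‖ ^ 2) := by rw [h1]
      _ = ‖p‖ := Real.sqrt_sq (norm_nonneg _)
  intro u v
  rw [dist_add_right, dist_eq_norm, dist_eq_norm, ← map_sub, hnorm]
end
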